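/- If R is nil-reversible, then the set of nilpotent elements of the polynomial ring R[x] equals N(R)[x], the set of polynomials all of whose coefficients are nilpotent. -/

import Mathlib

section NrAux

variable {S : Type*} [Ring S]

/-- The word `e * g 0 * e * g 1 * e * ⋯ * g (j-1) * e` containing `j+1` copies of `e`. -/
def nrWord (e : S) (g : ℕ → S) : ℕ → S
  | 0 => e
  | j + 1 => nrWord e g j * g j * e

lemma nrWord_congr (e : S) {g g' : ℕ → S} :
    ∀ j, (∀ i < j, g i = g' i) → nrWord e g j = nrWord e g' j
  | 0, _ => rfl
  | j + 1, h => by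
    show nrWord e g j * g j * e = nrWord e g' j * g' j * e
    rw [nrWord_congr e j (fun i hi => h i (Nat.lt_succ_of_lt hi)), h j (Nat.lt_succ_self j)]

lemma nrWord_mul_pow {e : S} {nn : ℕ} (hN : e ^ (nn + 1) = 0)
    (He : ∀ (k : ℕ) (u r : S), u * e ^ (k + 1) = 0 → u * r * e ^ (k + 1) = 0) :
    ∀ j k, j + k + 1 = nn + 1 → ∀ g : ℕ → S, nrWord e g j * e ^ k = 0
  | 0, k, h, g => by
    have h1 : e * e ^ k = e ^ (k + 1) := (pow_succ' e k).symm
    rw [nrWord, h1, show k + 1 = nn + 1 by omega, hN]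
  | j + 1, k, h, g => by
    have ih := nrWord_mul_pow hN He j (k + 1) (by omega) g
    have h2 := He (k := k) (nrWord e g j) (g j) ih
    show nrWord e g j * g j * e * e ^ k = 0
    rw [mul_assoc (nrWord e g j * g j), ← pow_succ' e k]
    exact h2

lemma nrWord_eq_zero {e : S} {nn : ℕ} (hN : e ^ (nn + 1) = 0)
    (He : ∀ (k : ℕ) (u r : S), u * e ^ (k + 1) = 0 → u * r * e ^ (k + 1) = 0)
    (g : ℕ → S) : nrWord e g nn = 0 := by
  have := nrWord_mul_pow hN He nn 0 (by omega) g
  simpa using this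

/-- The additive submonoid generated by products containing a word with `j+1` copies of `e`. -/
def nrJ (e : S) (j : ℕ) : AddSubmonoid S :=
  AddSubmonoid.closure {t | ∃ u v g, t = u * nrWord e g j * v}

lemma nrJ_mul_right {e : S} {j : ℕ} {t : S} (ht : t ∈ nrJ e j) (s : S) :
    t * s ∈ nrJ e j := by
  induction ht using AddSubmonoid.closure_induction with
  | mem x hx =>
    obtain ⟨u, v, g, rfl⟩ := hx
    exact AddSubmonoid.subset_closure ⟨u, v * s, g, by rw [mul_assoc]⟩
  | zero => simpa using (nrJ e j).zero_mem
  | add x y hx hy px py =>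
    rw [add_mul]; exact (nrJ e j).add_mem px py

lemma nrJ_mul {e : S} {i : ℕ} {t s : S} (ht : t ∈ nrJ e i) (hs : s ∈ nrJ e 0) :
    t * s ∈ nrJ e (i + 1) := by
  induction hs using AddSubmonoid.closure_induction with
  | mem x hx =>
    obtain ⟨u', v', g', rfl⟩ := hx
    induction ht using AddSubmonoid.closure_induction with
    | mem y hy =>
      obtain ⟨u, v, g, rfl⟩ := hy
      refine AddSubmonoid.subset_closure
        ⟨u, v', fun m => if m = i then v * u' else g m, ?_⟩
      have hw : nrWord e (fun m => if m = i then v * u' else g m) (i + 1)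
          = nrWord e g i * (v * u') * e := by
        show nrWord e (fun m => if m = i then v * u' else g m) i * _ * e = _
        rw [nrWord_congr e i (g' := g) (fun m hm => if_neg (Nat.ne_of_lt hm))]
        simp
      rw [hw]
      have : nrWord e g' 0 = e := rfl
      rw [this]
      simp only [mul_assoc]
    | zero =>
      have : (0 : S) * (u' * nrWord e g' 0 * v') = 0 := by simp
      rw [this]; exact (nrJ e (i + 1)).zero_mem
    | add y z hy hz py pz =>
      rw [add_mul]; exact (nrJ e (i + 1)).add_mem py pz
  | zero =>
    have : t * (0 : S) = 0 := by simp
    rw [this]; exact (nrJ e (i + 1)).zero_mem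
  | add x y hx hy px py =>
    rw [mul_add]; exact (nrJ e (i + 1)).add_mem px py

lemma nrJ_pow {e : S} {t : S} (ht : t ∈ nrJ e 0) : ∀ j, t ^ (j + 1) ∈ nrJ e j
  | 0 => by simpa using ht
  | j + 1 => by
    have := nrJ_mul (nrJ_pow ht j) ht
    rwa [← pow_succ] at this

lemma nrJ_eq_zero {e : S} {nn : ℕ} (hN : e ^ (nn + 1) = 0)
    (He : ∀ (k : ℕ) (u r : S), u * e ^ (k + 1) = 0 → u * r * e ^ (k + 1) = 0)
    {t : S} (ht : t ∈ nrJ e nn) : t = 0 := by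
  induction ht using AddSubmonoid.closure_induction with
  | mem x hx =>
    obtain ⟨u, v, g, rfl⟩ := hx
    rw [nrWord_eq_zero hN He g, mul_zero, zero_mul]
  | zero => rfl
  | add x y hx hy px py => rw [px, py, add_zero]

lemma nr_pow_sub_mem (e F v : S) :
    ∀ k : ℕ, (F + e * v) ^ k - F ^ k ∈ nrJ e 0
  | 0 => by simpa using (nrJ e 0).zero_mem
  | k + 1 => by
    have ih := nr_pow_sub_mem e F v k
    have h1 : (F + e * v) ^ (k + 1) - F ^ (k + 1)
        = ((F + e * v) ^ k - F ^ k) * (F + e * v) + F ^ k * (e * v) := by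
      rw [pow_succ, pow_succ]; noncomm_ring
    rw [h1]
    refine (nrJ e 0).add_mem (nrJ_mul_right ih _) ?_
    exact AddSubmonoid.subset_closure ⟨F ^ k, v, fun _ => 1, by rw [nrWord, mul_assoc]⟩

/-- Main abstract lemma: if `e` is "insertion-nilpotent" then adding `e * v` preserves
nilpotency. -/
lemma nr_main {e : S} {nn : ℕ} (hN : e ^ (nn + 1) = 0)
    (He : ∀ (k : ℕ) (u r : S), u * e ^ (k + 1) = 0 → u * r * e ^ (k + 1) = 0)
    {F : S} (hF : IsNilpotent F) (v : S) : IsNilpotent (F + e * v) := by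
  obtain ⟨K, hK⟩ := hF
  have hmem : (F + e * v) ^ K ∈ nrJ e 0 := by
    have := nr_pow_sub_mem e F v K
    rwa [hK, sub_zero] at this
  refine ⟨K * (nn + 1), ?_⟩
  rw [pow_mul]
  exact nrJ_eq_zero hN He (nrJ_pow hmem nn)

end NrAux

section NrPoly

open Polynomial

variable {R : Type*} [Ring R]

lemma nr_poly_rev (hnr : ∀ a : R, IsNilpotent a → ∀ x : R, x * a = 0 ↔ a * x = 0)
    {b : R} (hb : IsNilpotent b) (P : R[X]) : P * C b = 0 ↔ C b * P = 0 := by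
  constructor <;> intro h <;> ext i
  · have := Polynomial.ext_iff.mp h i
    rw [coeff_mul_C] at this
    simpa [coeff_C_mul] using (hnr b hb (P.coeff i)).mp this
  · have := Polynomial.ext_iff.mp h i
    rw [coeff_C_mul] at this
    simpa [coeff_mul_C] using (hnr b hb (P.coeff i)).mpr this

lemma nr_poly_He (hnr : ∀ a : R, IsNilpotent a → ∀ x : R, x * a = 0 ↔ a * x = 0)
    {a : R} (ha : IsNilpotent a) :
    ∀ (k : ℕ) (u r : R[X]), u * (C a) ^ (k + 1) = 0 → u * r * (C a) ^ (k + 1) = 0 := by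
  intro k u r h
  have hb : IsNilpotent (a ^ (k + 1)) := IsNilpotent.pow_succ k ha
  rw [← map_pow] at h ⊢
  have h1 : C (a ^ (k + 1)) * u = 0 := (nr_poly_rev hnr hb u).mp h
  have h2 : C (a ^ (k + 1)) * (u * r) = 0 := by rw [← mul_assoc, h1, zero_mul]
  exact (nr_poly_rev hnr hb (u * r)).mpr h2

/-- Adding a monomial with nilpotent coefficient preserves nilpotency. -/
lemma nr_poly_add_mono (hnr : ∀ a : R, IsNilpotent a → ∀ x : R, x * a = 0 ↔ a * x = 0)
    {F : R[X]} (hF : IsNilpotent F) {a : R} (ha : IsNilpotent a) (d : ℕ) :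
    IsNilpotent (F + C a * X ^ d) := by
  obtain ⟨K, hK⟩ := ha
  have hN : (C a : R[X]) ^ (K + 1) = 0 := by
    rw [← map_pow, pow_succ, hK, zero_mul, map_zero]
  exact nr_main hN (nr_poly_He hnr ⟨K, hK⟩) hF (X ^ d)

lemma nr_poly_bwd (hnr : ∀ a : R, IsNilpotent a → ∀ x : R, x * a = 0 ↔ a * x = 0) :
    ∀ (n : ℕ) (f : R[X]), f.natDegree ≤ n → (∀ i, IsNilpotent (f.coeff i)) →
      IsNilpotent f
  | 0, f, hd, hc => by
    have hf : f = C (f.coeff 0) := Polynomial.eq_C_of_natDegree_le_zero hd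
    obtain ⟨K, hK⟩ := hc 0
    exact ⟨K, by rw [hf, ← map_pow, hK, map_zero]⟩
  | n + 1, f, hd, hc => by
    have herase : IsNilpotent f.eraseLead := by
      refine nr_poly_bwd hnr n f.eraseLead ?_ ?_
      · exact le_trans f.eraseLead_natDegree_le (by omega)
      · intro i
        rw [Polynomial.eraseLead_coeff]
        split
        · exact IsNilpotent.zero
        · exact hc i
    have := nr_poly_add_mono hnr herase (a := f.leadingCoeff)
      (hc f.natDegree) f.natDegree
    rwa [Polynomial.eraseLead_add_C_mul_X_pow] at this

lemma nr_poly_fwd (hnr : ∀ a : R, IsNilpotent a → ∀ x : R, x * a = 0 ↔ a * x = 0) :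
    ∀ (n : ℕ) (f : R[X]), f.natDegree ≤ n → IsNilpotent f →
      ∀ i, IsNilpotent (f.coeff i) := by
  intro n
  induction n with
  | zero =>
    intro f hd hf i
    rcases Nat.eq_zero_or_pos i with rfl | hi
    · obtain ⟨K, hK⟩ := hf
      refine ⟨K, ?_⟩
      have := Polynomial.coeff_pow_mul_natDegree f K
      rw [hK, Polynomial.coeff_zero] at this
      rw [Polynomial.leadingCoeff, Nat.le_zero.mp hd] at this
      exact this.symm
    · rw [Polynomial.coeff_eq_zero_of_natDegree_lt (lt_of_le_of_lt hd hi)]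
      exact IsNilpotent.zero
  | succ n ih =>
    intro f hd hf i
    have hlead : IsNilpotent f.leadingCoeff := by
      obtain ⟨K, hK⟩ := hf
      refine ⟨K, ?_⟩
      have := Polynomial.coeff_pow_mul_natDegree f K
      rw [hK, Polynomial.coeff_zero] at this
      exact this.symm
    have herase : IsNilpotent f.eraseLead := by
      have h1 : f.eraseLead = f + C (-f.leadingCoeff) * X ^ f.natDegree := by
        rw [map_neg, neg_mul, ← sub_eq_add_neg, eq_sub_iff_add_eq]
        exact f.eraseLead_add_C_mul_X_pow
      rw [h1]
      exact nr_poly_add_mono hnr hf hlead.neg f.natDegree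
    rcases eq_or_ne i f.natDegree with rfl | hne
    · exact hlead
    · have h2 : f.coeff i = f.eraseLead.coeff i := by
        rw [Polynomial.eraseLead_coeff, if_neg hne]
      rw [h2]
      exact ih f.eraseLead (le_trans f.eraseLead_natDegree_le (by omega)) herase i

end NrPoly

open Polynomial in
/-- If R is nil-reversible then N(R[x]) = N(R)[x]. -/
theorem nilReversible_nilpotent_poly_iff (R : Type*) [Ring R]
    (hnr : ∀ a : R, IsNilpotent a → ∀ x : R, x * a = 0 ↔ a * x = 0) :
    ∀ f : R[X], IsNilpotent f ↔ ∀ i : ℕ, IsNilpotent (f.coeff i) := by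
  intro f
  constructor
  · exact fun hf => nr_poly_fwd hnr f.natDegree f le_rfl hf
  · exact fun hc => nr_poly_bwd hnr f.natDegree f le_rfl hc
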